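/- Let G be a graph whose vertex set partitions into two cliques K_1 and K_2, each of size 2ℓ, with orderings such that closed neighbourhoods are nested as in a co-chain graph. Let X_1 = {c ∈ K_1 : bottom half of K_2 ⊆ N[c]} and X_2 = {d ∈ K_2 : top half of K_1 ⊆ N[d]}. Then |X_1| ≥ ℓ if and only if |X_2| ≥ ℓ. -/

import Mathlib

open Finset

/-- A triangle in `G`: a 3-element vertex set that is a clique. -/
def IsTriangle {V : Type*} (G : SimpleGraph V) (t : Finset V) : Prop :=
  t.card = 3 ∧ G.IsClique ↑t

/-- A triangle packing: a family of pairwise edge-disjoint triangles. -/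
def IsTrianglePacking {V : Type*} [DecidableEq V] (G : SimpleGraph V)
    (P : Finset (Finset V)) : Prop :=
  (∀ t ∈ P, IsTriangle G t) ∧
    ∀ t₁ ∈ P, ∀ t₂ ∈ P, t₁ ≠ t₂ → (t₁ ∩ t₂).card ≤ 1

/-- A triangle hitting set: a set of edges of `G` meeting every triangle of `G`. -/
def IsTriangleHitting {V : Type*} [Fintype V] [DecidableEq V] (G : SimpleGraph V)
    [DecidableRel G.Adj] (H : Finset (Sym2 V)) : Prop :=
  H ⊆ G.edgeFinset ∧
    ∀ t : Finset V, IsTriangle G t → ∃ e ∈ H, ∀ v ∈ e, v ∈ t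

/-- The minimum size of a triangle hitting set, `τ(G)`. -/
noncomputable def triTau {V : Type*} [Fintype V] [DecidableEq V] (G : SimpleGraph V)
    [DecidableRel G.Adj] : ℕ :=
  sInf {n | ∃ H : Finset (Sym2 V), IsTriangleHitting G H ∧ H.card = n}

/-- The maximum size of a triangle packing, `μ(G)`. -/
noncomputable def triMu {V : Type*} [Fintype V] [DecidableEq V] (G : SimpleGraph V) : ℕ :=
  sSup {n | ∃ P : Finset (Finset V), IsTrianglePacking G P ∧ P.card = n}

/-- A set of edges forming a matching (pairwise vertex-disjoint edges). -/
def IsMatchingSet {V : Type*} (M : Finset (Sym2 V)) : Prop :=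
  ∀ e₁ ∈ M, ∀ e₂ ∈ M, e₁ ≠ e₂ → ∀ v : V, v ∈ e₁ → v ∉ e₂

/-- A threshold representation of a graph `G`: the `c i` form a clique with nested
closed neighbourhoods, the `u j` form an independent set with nested neighbourhoods,
and together they partition the vertex set. -/
structure ThresholdRep {V : Type*} (G : SimpleGraph V) where
  k : ℕ
  s : ℕ
  c : Fin k → V
  u : Fin s → V
  inj_c : Function.Injective c
  inj_u : Function.Injective u
  disj : ∀ i j, c i ≠ u j
  cover : ∀ v : V, (∃ i, v = c i) ∨ (∃ j, v = u j)
  clique : ∀ i j, i ≠ j → G.Adj (c i) (c j)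
  indep : ∀ i j, ¬ G.Adj (u i) (u j)
  nestedK : ∀ (i : Fin k) (h : i.val + 1 < k),
    (insert (c ⟨i.val + 1, h⟩) (G.neighborSet (c ⟨i.val + 1, h⟩)) : Set V) ⊆
      insert (c i) (G.neighborSet (c i))
  nestedS : ∀ (j : Fin s) (h : j.val + 1 < s),
    G.neighborSet (u j) ⊆ G.neighborSet (u ⟨j.val + 1, h⟩)

/-- A co-chain representation of a graph `G`: two cliques `c` and `d` partitioning the
vertex set, with nested closed neighbourhoods along each ordering. -/
structure CoChainRep {V : Type*} (G : SimpleGraph V) where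
  n : ℕ
  m : ℕ
  c : Fin n → V
  d : Fin m → V
  inj_c : Function.Injective c
  inj_d : Function.Injective d
  disj : ∀ i j, c i ≠ d j
  cover : ∀ v : V, (∃ i, v = c i) ∨ (∃ j, v = d j)
  clique1 : ∀ i j, i ≠ j → G.Adj (c i) (c j)
  clique2 : ∀ i j, i ≠ j → G.Adj (d i) (d j)
  nested1 : ∀ (i : Fin n) (h : i.val + 1 < n),
    (insert (c ⟨i.val + 1, h⟩) (G.neighborSet (c ⟨i.val + 1, h⟩)) : Set V) ⊆
      insert (c i) (G.neighborSet (c i))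
  nested2 : ∀ (i : Fin m) (h : i.val + 1 < m),
    (insert (d i) (G.neighborSet (d i)) : Set V) ⊆
      insert (d ⟨i.val + 1, h⟩) (G.neighborSet (d ⟨i.val + 1, h⟩))

/-- In a balanced co-chain graph with both cliques of size `2ℓ`, letting `X₁` be the
vertices of the first clique dominating the bottom half of the second and `X₂` the
vertices of the second clique dominating the top half of the first, we have
`|X₁| ≥ ℓ ↔ |X₂| ≥ ℓ`. -/
lemma nested1_mono {V : Type*} {G : SimpleGraph V} (R : CoChainRep G)
    (i i' : Fin R.n) (h : i.val ≤ i'.val) :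
    (insert (R.c i') (G.neighborSet (R.c i')) : Set V) ⊆
      insert (R.c i) (G.neighborSet (R.c i)) := by
  obtain ⟨k, hk⟩ := Nat.exists_eq_add_of_le h
  induction k generalizing i' with
  | zero =>
    have : i' = i := Fin.ext (by omega)
    subst this; exact subset_rfl
  | succ k ih =>
    have hmid : i.val + k < R.n := by omega
    have h1 : (⟨i.val + k, hmid⟩ : Fin R.n).val + 1 < R.n :=
      show i.val + k + 1 < R.n by have := i'.isLt; omega
    have he : (⟨(⟨i.val + k, hmid⟩ : Fin R.n).val + 1, h1⟩ : Fin R.n) = i' :=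
      Fin.ext (show i.val + k + 1 = i'.val by omega)
    have := R.nested1 ⟨i.val + k, hmid⟩ h1
    rw [he] at this
    exact this.trans (ih ⟨i.val + k, hmid⟩ (Nat.le_add_right _ _) rfl)

lemma nested2_mono {V : Type*} {G : SimpleGraph V} (R : CoChainRep G)
    (j j' : Fin R.m) (h : j.val ≤ j'.val) :
    (insert (R.d j) (G.neighborSet (R.d j)) : Set V) ⊆
      insert (R.d j') (G.neighborSet (R.d j')) := by
  obtain ⟨k, hk⟩ := Nat.exists_eq_add_of_le h
  induction k generalizing j' with
  | zero =>
    have : j' = j := Fin.ext (by omega)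
    subst this; exact subset_rfl
  | succ k ih =>
    have hmid : j.val + k < R.m := by omega
    have h1 : (⟨j.val + k, hmid⟩ : Fin R.m).val + 1 < R.m :=
      show j.val + k + 1 < R.m by have := j'.isLt; omega
    have he : (⟨(⟨j.val + k, hmid⟩ : Fin R.m).val + 1, h1⟩ : Fin R.m) = j' :=
      Fin.ext (show j.val + k + 1 = j'.val by omega)
    have step := R.nested2 ⟨j.val + k, hmid⟩ h1
    rw [he] at step
    exact (ih ⟨j.val + k, hmid⟩ (Nat.le_add_right _ _) rfl).trans step

theorem cochain_X_iff {V : Type*} [Fintype V] [DecidableEq V]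
    (G : SimpleGraph V) [DecidableRel G.Adj]
    (R : CoChainRep G) (ℓ : ℕ) (hn : R.n = 2 * ℓ) (hm : R.m = 2 * ℓ)
    (X₁ : Finset (Fin R.n)) (X₂ : Finset (Fin R.m))
    (hX₁ : X₁ = Finset.univ.filter
      (fun i => ∀ j : Fin R.m, ℓ ≤ j.val → (R.d j = R.c i ∨ G.Adj (R.c i) (R.d j))))
    (hX₂ : X₂ = Finset.univ.filter
      (fun j => ∀ i : Fin R.n, i.val < ℓ → (R.c i = R.d j ∨ G.Adj (R.d j) (R.c i)))) :
    (ℓ ≤ X₁.card ↔ ℓ ≤ X₂.card) := by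
  rcases Nat.eq_zero_or_pos ℓ with h0 | hpos
  · subst h0; exact ⟨fun _ => Nat.zero_le _, fun _ => Nat.zero_le _⟩
  have ha : ℓ - 1 < R.n := by omega
  have hb : ℓ < R.m := by omega
  set a : Fin R.n := ⟨ℓ - 1, ha⟩ with ha_def
  set b : Fin R.m := ⟨ℓ, hb⟩ with hb_def
  have memN : ∀ (x y : V), x ∈ (insert y (G.neighborSet y) : Set V) ↔
      (x = y ∨ G.Adj y x) := by
    intro x y; simp [SimpleGraph.mem_neighborSet]
  -- Claim 1 : ℓ ≤ X₁.card ↔ G.Adj (R.c a) (R.d b)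
  have claim1 : ℓ ≤ X₁.card ↔ G.Adj (R.c a) (R.d b) := by
    constructor
    · intro hcard
      -- find i ∈ X₁ with ℓ - 1 ≤ i.val
      by_cases hall : ∃ i ∈ X₁, ℓ - 1 ≤ i.val
      · obtain ⟨i, hi, hile⟩ := hall
        rw [hX₁, Finset.mem_filter] at hi
        have hib := hi.2 b (by simp [hb_def])
        have hmem : R.d b ∈ (insert (R.c i) (G.neighborSet (R.c i)) : Set V) := by
          rw [memN]; tauto
        have := nested1_mono R a i hile hmem
        rw [memN] at this
        rcases this with h | h
        · exact absurd h.symm (R.disj a b)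
        · exact h
      · push_neg at hall
        exfalso
        have : X₁.card ≤ (Finset.range (ℓ - 1)).card := by
          apply Finset.card_le_card_of_injOn (fun i => i.val)
          · intro i hi; exact Finset.mem_range.mpr (by have := hall i hi; omega)
          · intro x _ y _ hxy; exact Fin.val_injective hxy
        rw [Finset.card_range] at this
        omega
    · intro hadj
      have hsub : Finset.univ.filter (fun i : Fin R.n => i.val < ℓ) ⊆ X₁ := by
        intro i hi
        rw [Finset.mem_filter] at hi
        rw [hX₁, Finset.mem_filter]
        refine ⟨Finset.mem_univ _, fun j hj => ?_⟩
        have h1 : R.d b ∈ (insert (R.c i) (G.neighborSet (R.c i)) : Set V) :=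
          nested1_mono R i a (by simp [ha_def]; omega)
            ((memN _ _).mpr (Or.inr hadj))
        rw [memN] at h1
        rcases h1 with h1 | h1
        · exact absurd h1.symm (R.disj i b)
        have h2 : R.c i ∈ (insert (R.d j) (G.neighborSet (R.d j)) : Set V) :=
          nested2_mono R b j (by simp [hb_def]; omega)
            ((memN _ _).mpr (Or.inr h1.symm))
        rw [memN] at h2
        rcases h2 with h2 | h2
        · exact absurd h2 (R.disj i j)
        · exact Or.inr h2.symm
      have hcard : ℓ ≤ (Finset.univ.filter (fun i : Fin R.n => i.val < ℓ)).card := by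
        have hpos_n : 0 < R.n := by omega
        have : (Finset.range ℓ).card ≤
            (Finset.univ.filter (fun i : Fin R.n => i.val < ℓ)).card := by
          apply Finset.card_le_card_of_injOn (fun k => (⟨k % R.n, Nat.mod_lt _ hpos_n⟩ : Fin R.n))
          · intro k hk
            rw [Finset.mem_coe, Finset.mem_range] at hk
            have hk' : k < R.n := by omega
            simp [Finset.mem_filter, Nat.mod_eq_of_lt hk', hk]
          · intro x hx y hy hxy
            simp only [Finset.coe_range, Set.mem_Iio] at hx hy
            have hx' : x < R.n := by omega
            have hy' : y < R.n := by omega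
            have := congrArg Fin.val hxy
            simpa [Nat.mod_eq_of_lt hx', Nat.mod_eq_of_lt hy'] using this
        rwa [Finset.card_range] at this
      exact hcard.trans (Finset.card_le_card hsub)
  -- Claim 2 : ℓ ≤ X₂.card ↔ G.Adj (R.c a) (R.d b)
  have claim2 : ℓ ≤ X₂.card ↔ G.Adj (R.c a) (R.d b) := by
    constructor
    · intro hcard
      by_cases hall : ∃ j ∈ X₂, j.val ≤ ℓ
      · obtain ⟨j, hj, hjle⟩ := hall
        rw [hX₂, Finset.mem_filter] at hj
        have hja := hj.2 a (by simp [ha_def]; omega)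
        have hmem : R.c a ∈ (insert (R.d j) (G.neighborSet (R.d j)) : Set V) := by
          rw [memN]; tauto
        have := nested2_mono R j b hjle hmem
        rw [memN] at this
        rcases this with h | h
        · exact absurd h (R.disj a b)
        · exact h.symm
      · push_neg at hall
        exfalso
        have : X₂.card ≤ (Finset.range (ℓ - 1)).card := by
          apply Finset.card_le_card_of_injOn (fun j => j.val - (ℓ + 1))
          · intro j hj
            have h1 : ℓ < j.val := hall j hj
            have h2 := j.isLt
            exact Finset.mem_range.mpr (by show j.val - (ℓ + 1) < ℓ - 1; omega)
          · intro x hx y hy hxy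
            have h1 : ℓ < x.val := hall x (Finset.mem_coe.mp hx)
            have h2 : ℓ < y.val := hall y (Finset.mem_coe.mp hy)
            have hxy' : x.val - (ℓ + 1) = y.val - (ℓ + 1) := hxy
            exact Fin.ext (by omega)
        rw [Finset.card_range] at this
        omega
    · intro hadj
      have hsub : Finset.univ.filter (fun j : Fin R.m => ℓ ≤ j.val) ⊆ X₂ := by
        intro j hj
        rw [Finset.mem_filter] at hj
        rw [hX₂, Finset.mem_filter]
        refine ⟨Finset.mem_univ _, fun i hi => ?_⟩
        have h1 : R.d b ∈ (insert (R.c i) (G.neighborSet (R.c i)) : Set V) :=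
          nested1_mono R i a (by simp [ha_def]; omega)
            ((memN _ _).mpr (Or.inr hadj))
        rw [memN] at h1
        rcases h1 with h1 | h1
        · exact absurd h1.symm (R.disj i b)
        have h2 : R.c i ∈ (insert (R.d j) (G.neighborSet (R.d j)) : Set V) :=
          nested2_mono R b j (by simp [hb_def]; omega)
            ((memN _ _).mpr (Or.inr h1.symm))
        rw [memN] at h2
        rcases h2 with h2 | h2
        · exact absurd h2 (R.disj i j)
        · exact Or.inr h2
      have hcard : ℓ ≤ (Finset.univ.filter (fun j : Fin R.m => ℓ ≤ j.val)).card := by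
        have hpos_m : 0 < R.m := by omega
        have : (Finset.range ℓ).card ≤
            (Finset.univ.filter (fun j : Fin R.m => ℓ ≤ j.val)).card := by
          apply Finset.card_le_card_of_injOn
            (fun k => (⟨(k + ℓ) % R.m, Nat.mod_lt _ hpos_m⟩ : Fin R.m))
          · intro k hk
            rw [Finset.mem_coe, Finset.mem_range] at hk
            have hk' : k + ℓ < R.m := by omega
            simp [Finset.mem_filter, Nat.mod_eq_of_lt hk']
          · intro x hx y hy hxy
            simp only [Finset.coe_range, Set.mem_Iio] at hx hy
            have hx' : x + ℓ < R.m := by omega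
            have hy' : y + ℓ < R.m := by omega
            have := congrArg Fin.val hxy
            simp [Nat.mod_eq_of_lt hx', Nat.mod_eq_of_lt hy'] at this
            omega
        rwa [Finset.card_range] at this
      exact hcard.trans (Finset.card_le_card hsub)
  rw [claim1, claim2]
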